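/- arXiv:math/0312212 — 4 statements merged into one kernel-verified Lean document; each statement's English description precedes it below -/
import Mathlib

section
/- Let S_0 f(z) = (1/√2)(1+z) f(z²) and S_1 f(z) = (1/√2)(1−z) f(z²) on L²(𝕋). Then S_0 and S_1 satisfy the Cuntz relations S_i* S_j = δ_{ij} I and S_0 S_0* + S_1 S_1* = I, and S_j* e_0 = (1/√2) e_0 for j = 0, 1. -/
open MeasureTheory ContinuousLinearMap AddCircle
instance : Fact (0 < (1:ℝ)) := ⟨one_pos⟩
noncomputable section stmt5aux
local notation "μ" => (haarAddCircle : Measure (AddCircle (1:ℝ)))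
local notation "H" => Lp ℂ 2 μ
local notation "⟪" x ", " y "⟫" => @inner ℂ _ _ x y

lemma mp2 : MeasurePreserving (fun x : AddCircle (1:ℝ) => (2:ℕ) • x) μ μ := by
  have h := (AddCircle.ergodic_zsmul (T := 1) (n := 2) (by norm_num)).toMeasurePreserving
  rw [show (volume : Measure (AddCircle (1:ℝ))) = μ by
    rw [volume_eq_smul_haarAddCircle]; simp] at h
  have e : (fun x : AddCircle (1:ℝ) => (2:ℕ) • x) = fun y => (2:ℤ) • y := by
    funext y; exact (natCast_zsmul y 2).symm
  rw [e]; exact h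

lemma fourier_two_smul (n : ℤ) (x : AddCircle (1:ℝ)) :
    fourier n ((2:ℕ) • x) = fourier (2*n) x := by
  rw [fourier_apply, fourier_apply, ← natCast_zsmul x 2, smul_smul]
  norm_num [mul_comm]

lemma basis_ext {x y : H} (h : ∀ n : ℤ, ⟪fourierLp 2 n, x⟫ = ⟪fourierLp 2 n, y⟫) :
    x = y := by
  apply (fourierBasis (T := 1)).repr.injective
  ext n
  rw [fourierBasis.repr_apply_apply, fourierBasis.repr_apply_apply, coe_fourierBasis]
  exact h n

lemma inner_ff (m k : ℤ) :
    ⟪(fourierLp 2 m : H), (fourierLp 2 k : H)⟫ = if m = k then 1 else 0 :=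
  orthonormal_iff_ite.mp orthonormal_fourier m k

lemma hc : ((Real.sqrt 2 : ℂ))⁻¹ * ((Real.sqrt 2 : ℂ))⁻¹ = (2:ℂ)⁻¹ := by
  rw [← mul_inv, ← Complex.ofReal_mul, Real.mul_self_sqrt (by norm_num)]; norm_num

lemma aux1 (u v : Lp ℂ 2 (haarAddCircle : Measure (AddCircle (1:ℝ)))) :
    (u + v) + (u - v) = u + u := by abel

lemma aux2 (u v : Lp ℂ 2 (haarAddCircle : Measure (AddCircle (1:ℝ)))) :
    (u + v) - (u - v) = v + v := by abel

lemma conj_c : (starRingEnd ℂ) ((Real.sqrt 2 : ℂ))⁻¹ = ((Real.sqrt 2 : ℂ))⁻¹ := by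
  rw [map_inv₀, Complex.conj_ofReal]

section withS
variable (S : Fin 2 → H →L[ℂ] H)
variable (hS0 : ∀ f : H, (S 0 f : AddCircle (1:ℝ) → ℂ) =ᵐ[μ]
    fun x => (Real.sqrt 2 : ℂ)⁻¹ * (1 + fourier 1 x) * f (2 • x))
variable (hS1 : ∀ f : H, (S 1 f : AddCircle (1:ℝ) → ℂ) =ᵐ[μ]
    fun x => (Real.sqrt 2 : ℂ)⁻¹ * (1 - fourier 1 x) * f (2 • x))

include hS0 in
lemma SA0 (n : ℤ) : S 0 (fourierLp 2 n) =
    (Real.sqrt 2 : ℂ)⁻¹ • (fourierLp 2 (2*n) + fourierLp 2 (2*n+1)) := by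
  apply Lp.ext
  have h2 : (fun x => (fourierLp 2 n : AddCircle (1:ℝ) → ℂ) ((2:ℕ) • x)) =ᵐ[μ]
      (fun x => fourier n ((2:ℕ) • x)) :=
    mp2.quasiMeasurePreserving.ae_eq_comp (coeFn_fourierLp 2 n)
  filter_upwards [hS0 (fourierLp 2 n), h2,
    Lp.coeFn_smul ((Real.sqrt 2 : ℂ)⁻¹) (fourierLp 2 (2*n) + fourierLp 2 (2*n+1)),
    Lp.coeFn_add (fourierLp 2 (2*n) : H) (fourierLp 2 (2*n+1)),
    coeFn_fourierLp 2 (2*n), coeFn_fourierLp 2 (2*n+1)] with x h1 h2 h3 h4 h5 h6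
  rw [h1, h3]
  simp only [Pi.smul_apply, h4, Pi.add_apply, h5, h6, h2, smul_eq_mul]
  rw [fourier_two_smul, show (2*n+1 : ℤ) = 1 + 2*n by ring, fourier_add]
  ring

include hS1 in
lemma SA1 (n : ℤ) : S 1 (fourierLp 2 n) =
    (Real.sqrt 2 : ℂ)⁻¹ • (fourierLp 2 (2*n) - fourierLp 2 (2*n+1)) := by
  apply Lp.ext
  have h2 : (fun x => (fourierLp 2 n : AddCircle (1:ℝ) → ℂ) ((2:ℕ) • x)) =ᵐ[μ]
      (fun x => fourier n ((2:ℕ) • x)) :=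
    mp2.quasiMeasurePreserving.ae_eq_comp (coeFn_fourierLp 2 n)
  filter_upwards [hS1 (fourierLp 2 n), h2,
    Lp.coeFn_smul ((Real.sqrt 2 : ℂ)⁻¹) (fourierLp 2 (2*n) - fourierLp 2 (2*n+1)),
    Lp.coeFn_sub (fourierLp 2 (2*n) : H) (fourierLp 2 (2*n+1)),
    coeFn_fourierLp 2 (2*n), coeFn_fourierLp 2 (2*n+1)] with x h1 h2 h3 h4 h5 h6
  rw [h1, h3]
  simp only [Pi.smul_apply, h4, Pi.sub_apply, h5, h6, h2, smul_eq_mul]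
  rw [fourier_two_smul, show (2*n+1 : ℤ) = 1 + 2*n by ring, fourier_add]
  ring

include hS0 in
lemma inner_S0 (m k : ℤ) : ⟪S 0 (fourierLp 2 m), (fourierLp 2 k : H)⟫ =
    (Real.sqrt 2 : ℂ)⁻¹ *
      ((if 2*m = k then 1 else 0) + (if 2*m+1 = k then 1 else 0)) := by
  rw [SA0 S hS0 m, inner_smul_left, inner_add_left, inner_ff, inner_ff, conj_c]

include hS1 in
lemma inner_S1 (m k : ℤ) : ⟪S 1 (fourierLp 2 m), (fourierLp 2 k : H)⟫ =
    (Real.sqrt 2 : ℂ)⁻¹ *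
      ((if 2*m = k then 1 else 0) - (if 2*m+1 = k then 1 else 0)) := by
  rw [SA1 S hS1 m, inner_smul_left, inner_sub_left, inner_ff, inner_ff, conj_c]

include hS0 in
lemma adj0_even (n : ℤ) : adjoint (S 0) (fourierLp 2 (2*n)) =
    (Real.sqrt 2 : ℂ)⁻¹ • fourierLp 2 n := by
  apply basis_ext; intro m
  rw [adjoint_inner_right, inner_S0 S hS0, inner_smul_right, inner_ff]
  have h1 : (2*m = 2*n) ↔ (m = n) := by omega
  have h2 : ¬(2*m+1 = 2*n) := by omega
  simp [h1, h2]

include hS0 in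
lemma adj0_odd (n : ℤ) : adjoint (S 0) (fourierLp 2 (2*n+1)) =
    (Real.sqrt 2 : ℂ)⁻¹ • fourierLp 2 n := by
  apply basis_ext; intro m
  rw [adjoint_inner_right, inner_S0 S hS0, inner_smul_right, inner_ff]
  have h1 : (2*m+1 = 2*n+1) ↔ (m = n) := by omega
  have h2 : ¬(2*m = 2*n+1) := by omega
  simp only [h1, h2, if_false, zero_sub, mul_neg]
  split <;> simp

include hS1 in
lemma adj1_even (n : ℤ) : adjoint (S 1) (fourierLp 2 (2*n)) =
    (Real.sqrt 2 : ℂ)⁻¹ • fourierLp 2 n := by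
  apply basis_ext; intro m
  rw [adjoint_inner_right, inner_S1 S hS1, inner_smul_right, inner_ff]
  have h1 : (2*m = 2*n) ↔ (m = n) := by omega
  have h2 : ¬(2*m+1 = 2*n) := by omega
  simp [h1, h2]

include hS1 in
lemma adj1_odd (n : ℤ) : adjoint (S 1) (fourierLp 2 (2*n+1)) =
    (-(Real.sqrt 2 : ℂ)⁻¹) • fourierLp 2 n := by
  apply basis_ext; intro m
  rw [adjoint_inner_right, inner_S1 S hS1, inner_smul_right, inner_ff]
  have h1 : (2*m+1 = 2*n+1) ↔ (m = n) := by omega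
  have h2 : ¬(2*m = 2*n+1) := by omega
  simp only [h1, h2, if_false, zero_sub, mul_neg]
  split <;> simp

end withS
end stmt5aux

theorem stmt5
    (S : Fin 2 →
      Lp ℂ 2 (haarAddCircle : Measure (AddCircle (1:ℝ))) →L[ℂ]
        Lp ℂ 2 (haarAddCircle : Measure (AddCircle (1:ℝ))))
    (hS0 : ∀ f : Lp ℂ 2 (haarAddCircle : Measure (AddCircle (1:ℝ))),
      (S 0 f : AddCircle (1:ℝ) → ℂ) =ᵐ[haarAddCircle]
        fun x => (Real.sqrt 2 : ℂ)⁻¹ * (1 + fourier 1 x) * f (2 • x))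
    (hS1 : ∀ f : Lp ℂ 2 (haarAddCircle : Measure (AddCircle (1:ℝ))),
      (S 1 f : AddCircle (1:ℝ) → ℂ) =ᵐ[haarAddCircle]
        fun x => (Real.sqrt 2 : ℂ)⁻¹ * (1 - fourier 1 x) * f (2 • x)) :
    (∀ i j : Fin 2,
      (adjoint (S i)) ∘L (S j) =
        if i = j then
          (1 : Lp ℂ 2 (haarAddCircle : Measure (AddCircle (1:ℝ))) →L[ℂ]
            Lp ℂ 2 (haarAddCircle : Measure (AddCircle (1:ℝ))))
        else 0) ∧
    (S 0) ∘L (adjoint (S 0)) + (S 1) ∘L (adjoint (S 1)) = 1 ∧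
    (∀ j : Fin 2,
      adjoint (S j) (fourierLp 2 0) = (Real.sqrt 2 : ℂ)⁻¹ • fourierLp 2 0) := by
  have hd : Dense (Submodule.span ℂ
      (Set.range (fourierLp 2 : ℤ → Lp ℂ 2 (haarAddCircle : Measure (AddCircle (1:ℝ))))) :
        Set (Lp ℂ 2 (haarAddCircle : Measure (AddCircle (1:ℝ))))) := by
    rw [Submodule.dense_iff_topologicalClosure_eq_top, ← coe_fourierBasis (T := 1)]
    exact (fourierBasis (T := 1)).dense_span
  refine ⟨?_, ?_, ?_⟩
  · intro i j
    apply ContinuousLinearMap.ext_on hd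
    rintro _ ⟨n, rfl⟩
    fin_cases i <;> fin_cases j <;>
      simp only [Fin.isValue, comp_apply, if_true, if_false, Fin.zero_eq_one_iff,
        Fin.one_eq_zero_iff, Nat.succ_ne_self, ne_eq, OfNat.ofNat_ne_one,
        not_false_eq_true, if_neg, one_apply, zero_apply, Fin.mk_zero, Fin.mk_one]
    · rw [SA0 S hS0, _root_.map_smul, map_add, adj0_even S hS0, adj0_odd S hS0,
        smul_add, smul_smul, hc, ← add_smul]
      norm_num
    · rw [SA1 S hS1, _root_.map_smul, map_sub, adj0_even S hS0, adj0_odd S hS0]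
      simp
    · rw [SA0 S hS0, _root_.map_smul, map_add, adj1_even S hS1, adj1_odd S hS1]
      simp
    · rw [SA1 S hS1, _root_.map_smul, map_sub, adj1_even S hS1, adj1_odd S hS1,
        smul_sub, smul_smul, smul_smul, mul_neg, hc, neg_smul, sub_neg_eq_add, ← add_smul]
      norm_num
  · apply ContinuousLinearMap.ext_on hd
    rintro _ ⟨k, rfl⟩
    simp only [add_apply, comp_apply, one_apply]
    rcases Int.even_or_odd k with ⟨n, hn⟩ | ⟨n, hn⟩
    · rw [show k = 2*n by omega, adj0_even S hS0, adj1_even S hS1,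
        _root_.map_smul, _root_.map_smul, SA0 S hS0, SA1 S hS1,
        smul_smul, smul_smul, hc, smul_add, smul_sub, aux1, ← add_smul]
      norm_num
    · rw [show k = 2*n+1 by omega, adj0_odd S hS0, adj1_odd S hS1,
        _root_.map_smul, _root_.map_smul, SA0 S hS0, SA1 S hS1,
        smul_smul, smul_smul, neg_mul, hc, neg_smul, ← sub_eq_add_neg,
        smul_add, smul_sub, aux2, ← add_smul]
      norm_num
  · intro j
    have h0 : (fourierLp 2 0 : Lp ℂ 2 (haarAddCircle : Measure (AddCircle (1:ℝ)))) =
        fourierLp 2 (2*0) := by norm_num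
    fin_cases j <;>
      simp only [Fin.mk_zero, Fin.mk_one, Fin.isValue]
    · rw [h0, adj0_even S hS0]; norm_num
    · rw [h0, adj1_even S hS1]; norm_num
end

section
/- Let N ≥ 2, let (S_j) be a representation of O_N on H, let P be a projection-valued Borel measure on [0,1) satisfying the covariance ∑_j S_j P(σ_j^{-1}(E)) S_j* = P(E) where σ_j(x) = (x+j)/N, and suppose f ∈ H is a unit vector with S_j* f = λ_j f for all j. Then the probability measure μ(E) = ‖P(E)f‖² satisfies μ = ∑_{j=0}^{N-1} |λ_j|² · (μ ∘ σ_j^{-1}). -/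
open ContinuousLinearMap MeasureTheory

/-- The map `x ↦ (x + j)/N` on `[0,1)`. -/
noncomputable def sigma01 {N : ℕ} (hN : 0 < N) (j : Fin N) (x : Set.Ico (0:ℝ) 1) :
    Set.Ico (0:ℝ) 1 :=
  ⟨((x : ℝ) + j) / N, by
    obtain ⟨hx0, hx1⟩ := x.2
    have hN' : (0:ℝ) < N := by exact_mod_cast hN
    constructor
    · exact div_nonneg (add_nonneg hx0 (Nat.cast_nonneg _)) hN'.le
    · rw [div_lt_one hN']
      have hj : (j : ℝ) + 1 ≤ N := by exact_mod_cast j.2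
      linarith⟩

lemma sigma01_measurable {N : ℕ} (hN : 0 < N) (j : Fin N) :
    Measurable (sigma01 hN j) :=
  (Continuous.subtype_mk
    ((continuous_subtype_val.add continuous_const).div_const _) _).measurable

theorem stmt8 {H : Type*} [NormedAddCommGroup H] [InnerProductSpace ℂ H] [CompleteSpace H]
    (N : ℕ) (hN : 2 ≤ N) (hN0 : 0 < N) (S : Fin N → H →L[ℂ] H)
    (hiso : ∀ j k : Fin N, (adjoint (S j)) ∘L (S k) = if j = k then (1 : H →L[ℂ] H) else 0)
    (hsum : ∑ j : Fin N, (S j) ∘L (adjoint (S j)) = 1)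
    (P : Set (Set.Ico (0:ℝ) 1) → H →L[ℂ] H)
    (hproj : ∀ E : Set (Set.Ico (0:ℝ) 1), MeasurableSet E →
      adjoint (P E) = P E ∧ (P E) ∘L (P E) = P E)
    (huniv : P Set.univ = 1)
    (hadd : ∀ (A : ℕ → Set (Set.Ico (0:ℝ) 1)), (∀ n, MeasurableSet (A n)) →
      Pairwise (Function.onFun Disjoint A) →
      ∀ x : H, HasSum (fun n => P (A n) x) (P (⋃ n, A n) x))
    (hcov : ∀ E : Set (Set.Ico (0:ℝ) 1), MeasurableSet E →
      ∑ j : Fin N, (S j) ∘L (P ((sigma01 hN0 j) ⁻¹' E)) ∘L (adjoint (S j)) = P E)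
    (f : H) (hf : ‖f‖ = 1) (lam : Fin N → ℂ)
    (heig : ∀ j : Fin N, adjoint (S j) f = lam j • f)
    (μ : Measure (Set.Ico (0:ℝ) 1)) [IsProbabilityMeasure μ]
    (hμ : ∀ E : Set (Set.Ico (0:ℝ) 1), MeasurableSet E →
      μ E = ENNReal.ofReal (‖P E f‖ ^ 2)) :
    μ = ∑ j : Fin N, ENNReal.ofReal (‖lam j‖ ^ 2) • Measure.map (sigma01 hN0 j) μ := by
  ext E hE
  have hEj : ∀ j : Fin N, MeasurableSet ((sigma01 hN0 j) ⁻¹' E) :=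
    fun j => (sigma01_measurable hN0 j) hE
  -- For self-adjoint idempotent T : ⟪f, T f⟫ = ‖T f‖²
  have key : ∀ (T : H →L[ℂ] H), adjoint T = T → T ∘L T = T →
      (inner ℂ f (T f) : ℂ) = (‖T f‖ : ℂ) ^ 2 := by
    intro T h1 h2
    have h3 : (inner ℂ (T f) (T f) : ℂ) = inner ℂ f (T f) := by
      calc (inner ℂ (T f) (T f) : ℂ) = inner ℂ ((adjoint T) f) (T f) := by rw [h1]
        _ = inner ℂ f (T (T f)) := adjoint_inner_left ..
        _ = inner ℂ f ((T ∘L T) f) := rfl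
        _ = inner ℂ f (T f) := by rw [h2]
    rw [← h3, inner_self_eq_norm_sq_to_K]
    norm_num
  -- apply covariance to f
  have hPEf : P E f = ∑ j : Fin N, S j (P ((sigma01 hN0 j) ⁻¹' E) (adjoint (S j) f)) := by
    have := congrArg (fun T : H →L[ℂ] H => T f) (hcov E hE)
    simpa [ContinuousLinearMap.sum_apply, ContinuousLinearMap.comp_apply] using this.symm
  have hinner : (inner ℂ f (P E f) : ℂ)
      = ∑ j : Fin N, (‖lam j‖ : ℂ) ^ 2 * (‖P ((sigma01 hN0 j) ⁻¹' E) f‖ : ℂ) ^ 2 := by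
    rw [hPEf, inner_sum]
    refine Finset.sum_congr rfl fun j _ => ?_
    rw [heig j, _root_.map_smul, _root_.map_smul, inner_smul_right, ← adjoint_inner_left, heig j,
      inner_smul_left, key _ (hproj _ (hEj j)).1 (hproj _ (hEj j)).2]
    rw [← mul_assoc, RCLike.mul_conj]
    norm_cast
    exact (RCLike.ofReal_mul _ _).symm
  have hreal : ‖P E f‖ ^ 2
      = ∑ j : Fin N, ‖lam j‖ ^ 2 * ‖P ((sigma01 hN0 j) ⁻¹' E) f‖ ^ 2 := by
    have := (key (P E) (hproj E hE).1 (hproj E hE).2).symm.trans hinner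
    exact_mod_cast this
  rw [hμ E hE, hreal, Measure.finset_sum_apply]
  rw [ENNReal.ofReal_sum_of_nonneg (fun j _ => by positivity)]
  refine Finset.sum_congr rfl fun j _ => ?_
  rw [Measure.smul_apply, Measure.map_apply (sigma01_measurable hN0 j) hE,
    hμ _ (hEj j), smul_eq_mul, ← ENNReal.ofReal_mul (by positivity)]
end

section
/- Let N ≥ 2, (S_j) a representation of O_N on H, P a projection-valued Borel measure on [0,1) with the covariance property ∑_j S_j P(σ_j^{-1}(E)) S_j* = P(E) for σ_j(x) = (x+j)/N, and f ∈ H. Then the Fourier transform μ̂_f(t) = ∫_0^1 e^{itx} dμ_f(x) of μ_f(·) = ‖P(·)f‖² satisfies μ̂_f(t) = ∑_{k=0}^{N-1} e^{ikt/N} · μ̂_{S_k* f}(t/N) for all t ∈ ℝ. -/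
open ContinuousLinearMap MeasureTheory

theorem stmt12 {H : Type*} [NormedAddCommGroup H] [InnerProductSpace ℂ H] [CompleteSpace H]
    (N : ℕ) (hN : 2 ≤ N) (hN0 : 0 < N) (S : Fin N → H →L[ℂ] H)
    (hiso : ∀ j k : Fin N, (adjoint (S j)) ∘L (S k) = if j = k then (1 : H →L[ℂ] H) else 0)
    (hsum : ∑ j : Fin N, (S j) ∘L (adjoint (S j)) = 1)
    (P : Set (Set.Ico (0:ℝ) 1) → H →L[ℂ] H)
    (hproj : ∀ E : Set (Set.Ico (0:ℝ) 1), MeasurableSet E →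
      adjoint (P E) = P E ∧ (P E) ∘L (P E) = P E)
    (huniv : P Set.univ = 1)
    (hadd : ∀ (A : ℕ → Set (Set.Ico (0:ℝ) 1)), (∀ n, MeasurableSet (A n)) →
      Pairwise (Function.onFun Disjoint A) →
      ∀ x : H, HasSum (fun n => P (A n) x) (P (⋃ n, A n) x))
    (hcov : ∀ E : Set (Set.Ico (0:ℝ) 1), MeasurableSet E →
      ∑ j : Fin N, (S j) ∘L (P ((sigma01 hN0 j) ⁻¹' E)) ∘L (adjoint (S j)) = P E)
    (f : H)
    (μf : Measure (Set.Ico (0:ℝ) 1)) [IsFiniteMeasure μf]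
    (hμf : ∀ E : Set (Set.Ico (0:ℝ) 1), MeasurableSet E →
      μf E = ENNReal.ofReal (‖P E f‖ ^ 2))
    (μS : Fin N → Measure (Set.Ico (0:ℝ) 1)) [∀ k, IsFiniteMeasure (μS k)]
    (hμS : ∀ (k : Fin N) (E : Set (Set.Ico (0:ℝ) 1)), MeasurableSet E →
      μS k E = ENNReal.ofReal (‖P E (adjoint (S k) f)‖ ^ 2)) :
    ∀ t : ℝ,
      (∫ x, Complex.exp ((t * (x : ℝ) : ℝ) * Complex.I) ∂μf) =
        ∑ k : Fin N,
          Complex.exp (((k : ℝ) * t / N : ℝ) * Complex.I) *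
            ∫ x, Complex.exp (((t / N) * (x : ℝ) : ℝ) * Complex.I) ∂(μS k) := by
  intro t
  -- measurability of sigma01
  have hcont : ∀ j : Fin N, Continuous (sigma01 hN0 j) := by
    intro j
    exact Continuous.subtype_mk ((continuous_subtype_val.add continuous_const).div_const _) _
  have hm : ∀ j : Fin N, Measurable (sigma01 hN0 j) := fun j => (hcont j).measurable
  -- the measure identity
  have hμ : μf = ∑ j : Fin N, Measure.map (sigma01 hN0 j) (μS j) := by
    ext E hE
    have hEj : ∀ j : Fin N, MeasurableSet ((sigma01 hN0 j) ⁻¹' E) := fun j => (hm j) hE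
    set v : Fin N → H := fun j => P ((sigma01 hN0 j) ⁻¹' E) (adjoint (S j) f) with hv
    have hPE : P E f = ∑ j : Fin N, S j (v j) := by
      rw [← hcov E hE]
      simp [ContinuousLinearMap.sum_apply, ContinuousLinearMap.comp_apply, hv]
    have hinner : (inner ℂ (P E f) (P E f) : ℂ) = ∑ j : Fin N, inner ℂ (v j) (v j) := by
      rw [hPE, sum_inner]
      congr 1
      ext j
      rw [inner_sum]
      have : ∀ k : Fin N, (inner ℂ (S j (v j)) (S k (v k)) : ℂ)
          = if j = k then inner ℂ (v j) (v k) else 0 := by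
        intro k
        have h1 : (inner ℂ (S j (v j)) (S k (v k)) : ℂ)
            = inner ℂ (v j) (((adjoint (S j)) ∘L (S k)) (v k)) := by
          rw [ContinuousLinearMap.comp_apply, ContinuousLinearMap.adjoint_inner_right]
        rw [h1, hiso j k]
        by_cases h : j = k <;> simp [h]
      simp only [this]
      simp [Finset.sum_ite_eq]
    have hnorm : ‖P E f‖ ^ 2 = ∑ j : Fin N, ‖v j‖ ^ 2 := by
      have h1 : RCLike.re (inner ℂ (P E f) (P E f) : ℂ)
          = RCLike.re (∑ j : Fin N, (inner ℂ (v j) (v j) : ℂ)) := by rw [hinner]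
      rw [inner_self_eq_norm_sq] at h1
      rw [h1, map_sum]
      exact Finset.sum_congr rfl fun j _ => inner_self_eq_norm_sq (𝕜 := ℂ) (v j)
    rw [hμf E hE, hnorm, ENNReal.ofReal_sum_of_nonneg (fun j _ => sq_nonneg _)]
    rw [Measure.coe_finset_sum, Finset.sum_apply]
    congr 1
    ext j
    rw [Measure.map_apply (hm j) hE, hμS j _ (hEj j)]
  -- integrability
  have hcts : ∀ c : ℝ, Continuous (fun x : Set.Ico (0:ℝ) 1 =>
      Complex.exp ((c * (x : ℝ) : ℝ) * Complex.I)) := by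
    intro c
    exact Complex.continuous_exp.comp
      ((Complex.continuous_ofReal.comp (continuous_const.mul continuous_subtype_val)).mul
        continuous_const)
  have hint : ∀ (c : ℝ) (μ : Measure (Set.Ico (0:ℝ) 1)) [IsFiniteMeasure μ],
      Integrable (fun x : Set.Ico (0:ℝ) 1 => Complex.exp ((c * (x : ℝ) : ℝ) * Complex.I)) μ := by
    intro c μ _
    refine ⟨(hcts c).aestronglyMeasurable, ?_⟩
    apply HasFiniteIntegral.of_bounded (C := 1)
    filter_upwards with x
    rw [Complex.norm_exp_ofReal_mul_I]
  rw [hμ]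
  rw [integral_finset_sum_measure (fun j _ => ((hint t (Measure.map (sigma01 hN0 j) (μS j))
    : Integrable _ _)))]
  congr 1
  ext j
  rw [integral_map (hm j).aemeasurable]
  · rw [← integral_const_mul]
    congr 1
    ext x
    rw [← Complex.exp_add]
    congr 1
    have : t * (((x : ℝ) + (j : ℝ)) / N) = (j : ℝ) * t / N + (t / N) * (x : ℝ) := by
      field_simp; ring
    show ((t * (((x : ℝ) + (j : ℝ)) / N) : ℝ) : ℂ) * Complex.I = _
    rw [this]
    push_cast
    ring
  · exact (hcts t).aestronglyMeasurable
end

section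
/- With the hypotheses of the preceding covariance setting (N ≥ 2, Cuntz representation (S_j), projection-valued measure P on [0,1) with ∑_j S_j P(σ_j^{-1}(E)) S_j* = P(E) for σ_j(x)=(x+j)/N, f a unit vector, μ_f(·) = ‖P(·)f‖²), for every k ∈ ℕ and t ∈ ℝ: |μ̂_f(t) − ∑_{α ∈ {0,…,N-1}^k} e^{it(α_1/N + ⋯ + α_k/N^k)} ‖S_{α_k}* ⋯ S_{α_1}* f‖²| ≤ |t| N^{−k}. -/
open ContinuousLinearMap MeasureTheory

/-- left endpoint of the `α`-cylinder interval. -/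
noncomputable def cnum (N k : ℕ) (α : Fin k → Fin N) : ℝ :=
  ∑ i : Fin k, (α i : ℝ) / (N : ℝ) ^ ((i : ℕ) + 1)

/-- index of the `α`-cylinder interval. -/
def nfin {N k : ℕ} (α : Fin k → Fin N) : Fin (N ^ k) :=
  finFunctionFinEquiv (fun i => α (Fin.rev i))

lemma cnum_eq {N k : ℕ} (hN : 0 < N) (α : Fin k → Fin N) :
    cnum N k α = ((nfin α : ℕ) : ℝ) / (N : ℝ) ^ k := by
  have hN' : (0:ℝ) < N := by exact_mod_cast hN
  have h1 : ((nfin α : ℕ) : ℝ) = ∑ i : Fin k, (α (Fin.rev i) : ℝ) * (N:ℝ) ^ (i:ℕ) := by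
    rw [nfin, finFunctionFinEquiv_apply]
    push_cast
    rfl
  rw [cnum, h1, Finset.sum_div]
  refine (Fintype.sum_bijective Fin.rev Fin.rev_bijective _ _ ?_)
  intro i
  rw [Fin.rev_rev]
  have hpow : (N:ℝ) ^ k = (N:ℝ) ^ ((Fin.rev i : ℕ)) * (N:ℝ) ^ ((i:ℕ) + 1) := by
    rw [← pow_add]; congr 1; rw [Fin.val_rev]; omega
  rw [hpow]
  have h2 : (0:ℝ) < (N:ℝ) ^ ((Fin.rev i : ℕ)) := by positivity
  have h3 : (0:ℝ) < (N:ℝ) ^ ((i:ℕ) + 1) := by positivity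
  field_simp

lemma nfin_injective {N k : ℕ} : Function.Injective (nfin (N := N) (k := k)) := by
  intro α β h
  have h2 := finFunctionFinEquiv.injective h
  funext i
  have := congrFun h2 (Fin.rev i)
  simpa [Fin.rev_rev] using this

lemma nfin_surjective {N k : ℕ} : Function.Surjective (nfin (N := N) (k := k)) := by
  intro m
  refine ⟨fun i => finFunctionFinEquiv.symm m (Fin.rev i), ?_⟩
  rw [nfin]
  have : (fun i => finFunctionFinEquiv.symm m (Fin.rev (Fin.rev i))) =
      finFunctionFinEquiv.symm m := by
    funext i; rw [Fin.rev_rev]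
  rw [this, Equiv.apply_symm_apply]

/-- the `α`-cylinder interval as a subset of `[0,1)`. -/
def Iset (N k : ℕ) (α : Fin k → Fin N) : Set (Set.Ico (0:ℝ) 1) :=
  Subtype.val ⁻¹' Set.Ico (cnum N k α) (cnum N k α + 1 / (N : ℝ) ^ k)

lemma Iset_measurable {N k : ℕ} (α : Fin k → Fin N) : MeasurableSet (Iset N k α) :=
  measurableSet_Ico.preimage measurable_subtype_coe

lemma cnum_nonneg {N k : ℕ} (α : Fin k → Fin N) : 0 ≤ cnum N k α :=
  Finset.sum_nonneg fun i _ => by positivity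

lemma cnum_add_le_one {N k : ℕ} (hN : 0 < N) (α : Fin k → Fin N) :
    cnum N k α + 1 / (N : ℝ) ^ k ≤ 1 := by
  have hpow : (0:ℝ) < (N:ℝ) ^ k := by
    have : (0:ℝ) < N := by exact_mod_cast hN
    positivity
  rw [cnum_eq hN, ← add_div, div_le_one hpow]
  have h : (nfin α : ℕ) + 1 ≤ N ^ k := (nfin α).2
  exact_mod_cast h

lemma mem_Iset_iff {N k : ℕ} (hN : 0 < N) (α : Fin k → Fin N) (x : Set.Ico (0:ℝ) 1) :
    x ∈ Iset N k α ↔ ⌊(x : ℝ) * (N : ℝ) ^ k⌋₊ = (nfin α : ℕ) := by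
  have hpow : (0:ℝ) < (N:ℝ) ^ k := by
    have : (0:ℝ) < N := by exact_mod_cast hN
    positivity
  have hx0 : (0:ℝ) ≤ (x : ℝ) := x.2.1
  rw [Nat.floor_eq_iff (by positivity)]
  rw [Iset, Set.mem_preimage, Set.mem_Ico, cnum_eq hN]
  constructor
  · rintro ⟨h1, h2⟩
    constructor
    · calc ((nfin α : ℕ) : ℝ) = (nfin α : ℕ) / (N:ℝ)^k * (N:ℝ)^k := by field_simp
        _ ≤ (x : ℝ) * (N:ℝ)^k := by gcongr
    · have h3 : (x : ℝ) < ((nfin α : ℕ) + 1) / (N:ℝ)^k := by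
        rw [← add_div] at h2; exact h2
      calc (x : ℝ) * (N:ℝ)^k < ((nfin α : ℕ) + 1) / (N:ℝ)^k * (N:ℝ)^k := by gcongr
        _ = (nfin α : ℕ) + 1 := by field_simp
  · rintro ⟨h1, h2⟩
    constructor
    · rw [div_le_iff₀ hpow]; exact h1
    · rw [← lt_div_iff₀ hpow] at h2; rw [← add_div]
      convert h2 using 2

lemma Iset_zero {N : ℕ} (α : Fin 0 → Fin N) : Iset N 0 α = Set.univ := by
  ext x
  obtain ⟨hx0, hx1⟩ := x.2
  simp [Iset, cnum, hx0, hx1]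

lemma cnum_succ {N k : ℕ} (hN : 0 < N) (α : Fin (k+1) → Fin N) :
    cnum N (k+1) α = ((α 0 : ℝ) + cnum N k (fun i => α i.succ)) / N := by
  have hN' : (0:ℝ) < N := by exact_mod_cast hN
  rw [cnum, Fin.sum_univ_succ, cnum, add_div, Finset.sum_div]
  congr 1
  · norm_num
  · refine Finset.sum_congr rfl fun i _ => ?_
    rw [Fin.val_succ, pow_succ, ← div_div]

lemma sigma01_preimage_Iset {N k : ℕ} (hN0 : 0 < N) (j : Fin N) (α : Fin (k+1) → Fin N) :
    (sigma01 hN0 j) ⁻¹' (Iset N (k+1) α) =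
      if j = α 0 then Iset N k (fun i => α i.succ) else ∅ := by
  have hN' : (0:ℝ) < N := by exact_mod_cast hN0
  have hpow : (0:ℝ) < (N:ℝ) ^ k := by positivity
  have hc0 : (0:ℝ) ≤ cnum N k (fun i => α i.succ) := cnum_nonneg _
  have hc1 : cnum N k (fun i => α i.succ) + 1 / (N:ℝ) ^ k ≤ 1 := cnum_add_le_one hN0 _
  ext x
  obtain ⟨hx0, hx1⟩ := x.2
  have hmem : x ∈ (sigma01 hN0 j) ⁻¹' (Iset N (k+1) α) ↔
      ((α 0 : ℝ) + cnum N k (fun i => α i.succ) ≤ (x:ℝ) + (j:ℝ) ∧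
        (x:ℝ) + (j:ℝ) < (α 0 : ℝ) + cnum N k (fun i => α i.succ) + 1 / (N:ℝ)^k) := by
    rw [Set.mem_preimage, Iset, Set.mem_preimage, Set.mem_Ico, cnum_succ hN0 α, sigma01]
    have hexp : cnum N k (fun i => α i.succ) / 1 = cnum N k (fun i => α i.succ) := by ring
    constructor
    · rintro ⟨h1, h2⟩
      constructor
      · exact (div_le_div_iff_of_pos_right hN').mp h1
      · have h3 : ((x:ℝ) + (j:ℝ)) / N <
            ((α 0 : ℝ) + cnum N k (fun i => α i.succ) + 1 / (N:ℝ)^k) / N := by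
          rw [add_div _ (1 / (N:ℝ)^k), div_div, ← pow_succ]
          exact h2
        exact (div_lt_div_iff_of_pos_right hN').mp h3
    · rintro ⟨h1, h2⟩
      constructor
      · exact (div_le_div_iff_of_pos_right hN').mpr h1
      · rw [show ((α 0 : ℝ) + cnum N k (fun i => α i.succ)) / N + 1 / (N:ℝ)^(k+1)
            = ((α 0 : ℝ) + cnum N k (fun i => α i.succ) + 1 / (N:ℝ)^k) / N by
          rw [add_div _ (1 / (N:ℝ)^k), div_div, ← pow_succ]]
        exact (div_lt_div_iff_of_pos_right hN').mpr h2
  rw [hmem]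
  split_ifs with hj
  · subst hj
    rw [Iset, Set.mem_preimage, Set.mem_Ico]
    constructor
    · rintro ⟨h1, h2⟩; constructor <;> linarith
    · rintro ⟨h1, h2⟩; constructor <;> linarith
  · simp only [Set.mem_empty_iff_false, iff_false]
    rintro ⟨h1, h2⟩
    rcases lt_or_gt_of_ne (fun h : (j : ℕ) = (α 0 : ℕ) => hj (Fin.ext h)) with hlt | hgt
    · have : (j : ℝ) + 1 ≤ (α 0 : ℝ) := by exact_mod_cast hlt
      linarith
    · have : (α 0 : ℝ) + 1 ≤ (j : ℝ) := by exact_mod_cast hgt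
      linarith

lemma exp_mul_I_lip (a b : ℝ) :
    ‖Complex.exp ((a:ℂ) * Complex.I) - Complex.exp ((b:ℂ) * Complex.I)‖ ≤ |a - b| := by
  have hd : ∀ x : ℝ, HasDerivAt (fun y : ℝ => Complex.exp ((y:ℂ) * Complex.I))
      (Complex.exp ((x:ℂ) * Complex.I) * Complex.I) x := by
    intro x
    have h1 : HasDerivAt (fun y : ℝ => (y:ℂ) * Complex.I) Complex.I x := by
      simpa using (Complex.ofRealCLM.hasDerivAt (x := x)).mul_const Complex.I
    exact (Complex.hasDerivAt_exp ((x:ℂ) * Complex.I)).comp x h1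
  have := Convex.norm_image_sub_le_of_norm_hasDerivWithin_le (𝕜 := ℝ)
    (f := fun y : ℝ => Complex.exp ((y:ℂ) * Complex.I))
    (f' := fun y : ℝ => Complex.exp ((y:ℂ) * Complex.I) * Complex.I)
    (s := Set.univ) (C := 1)
    (fun y _ => (hd y).hasDerivWithinAt)
    (fun y _ => by
      rw [norm_mul, Complex.norm_exp_ofReal_mul_I, Complex.norm_I, one_mul])
    convex_univ (Set.mem_univ b) (Set.mem_univ a)
  simpa [Real.norm_eq_abs] using this

/-- The composite `S_{α 0} ∘ ⋯ ∘ S_{α (k-1)}`. -/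
noncomputable def cuntzT {H : Type*} [NormedAddCommGroup H] [InnerProductSpace ℂ H]
    {N : ℕ} (S : Fin N → H →L[ℂ] H) : (k : ℕ) → (Fin k → Fin N) → (H →L[ℂ] H)
  | 0, _ => 1
  | (k+1), α => S (α 0) ∘L cuntzT S k (fun i => α i.succ)

lemma adjoint_one' {H : Type*} [NormedAddCommGroup H] [InnerProductSpace ℂ H]
    [CompleteSpace H] : adjoint (1 : H →L[ℂ] H) = 1 := by
  rw [ContinuousLinearMap.one_def, adjoint_id]

lemma cuntzT_iso {H : Type*} [NormedAddCommGroup H] [InnerProductSpace ℂ H] [CompleteSpace H]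
    {N : ℕ} (S : Fin N → H →L[ℂ] H)
    (hiso : ∀ j : Fin N, (adjoint (S j)) ∘L (S j) = (1 : H →L[ℂ] H)) :
    ∀ (k : ℕ) (α : Fin k → Fin N), adjoint (cuntzT S k α) ∘L cuntzT S k α = 1 := by
  intro k
  induction k with
  | zero => intro α; show adjoint (cuntzT S 0 α) ∘L cuntzT S 0 α = 1; rw [cuntzT, adjoint_one', one_def, comp_id]
  | succ k ih =>
    intro α
    rw [cuntzT, adjoint_comp]
    ext v
    have h1 := hiso (α 0)
    have h2 := ih (fun i => α i.succ)
    simp only [comp_apply]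
    have e1 : adjoint (S (α 0)) (S (α 0) (cuntzT S k (fun i => α i.succ) v)) =
        cuntzT S k (fun i => α i.succ) v := by
      have := congrFun (congrArg (fun T : H →L[ℂ] H => (T : H → H)) h1)
        (cuntzT S k (fun i => α i.succ) v)
      simpa using this
    rw [e1]
    have := congrFun (congrArg (fun T : H →L[ℂ] H => (T : H → H)) h2) v
    simpa using this

lemma norm_map_of_iso {H : Type*} [NormedAddCommGroup H] [InnerProductSpace ℂ H]
    [CompleteSpace H] (T : H →L[ℂ] H) (hT : adjoint T ∘L T = 1) (v : H) : ‖T v‖ = ‖v‖ := by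
  have h1 : inner ℂ (T v) (T v) = inner ℂ v v := by
    have h2 : inner ℂ v (adjoint T (T v)) = inner ℂ (T v) (T v) :=
      adjoint_inner_right T v (T v)
    have h3 : adjoint T (T v) = v := by
      have := congrFun (congrArg (fun A : H →L[ℂ] H => (A : H → H)) hT) v
      simpa using this
    rw [h3] at h2
    exact h2.symm
  have h4 := congrArg (RCLike.re (K := ℂ)) h1
  rw [inner_self_eq_norm_sq (𝕜 := ℂ), inner_self_eq_norm_sq (𝕜 := ℂ)] at h4
  nlinarith [norm_nonneg (T v), norm_nonneg v]

lemma foldl_eq_adjoint {H : Type*} [NormedAddCommGroup H] [InnerProductSpace ℂ H]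
    [CompleteSpace H] {N : ℕ} (S : Fin N → H →L[ℂ] H) :
    ∀ (k : ℕ) (α : Fin k → Fin N) (v : H),
      List.foldl (fun (w : H) (T : H →L[ℂ] H) => T w) v
        (List.ofFn fun i => adjoint (S (α i))) = adjoint (cuntzT S k α) v := by
  intro k
  induction k with
  | zero => intro α v; simp [cuntzT, adjoint_one']
  | succ k ih =>
    intro α v
    rw [List.ofFn_succ, List.foldl_cons, ih (fun i => α i.succ), cuntzT, adjoint_comp,
      comp_apply]
theorem stmt13 {H : Type*} [NormedAddCommGroup H] [InnerProductSpace ℂ H] [CompleteSpace H]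
    (N : ℕ) (hN : 2 ≤ N) (hN0 : 0 < N) (S : Fin N → H →L[ℂ] H)
    (hiso : ∀ j k : Fin N, (adjoint (S j)) ∘L (S k) = if j = k then (1 : H →L[ℂ] H) else 0)
    (hsum : ∑ j : Fin N, (S j) ∘L (adjoint (S j)) = 1)
    (P : Set (Set.Ico (0:ℝ) 1) → H →L[ℂ] H)
    (hproj : ∀ E : Set (Set.Ico (0:ℝ) 1), MeasurableSet E →
      adjoint (P E) = P E ∧ (P E) ∘L (P E) = P E)
    (huniv : P Set.univ = 1)
    (hadd : ∀ (A : ℕ → Set (Set.Ico (0:ℝ) 1)), (∀ n, MeasurableSet (A n)) →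
      Pairwise (Function.onFun Disjoint A) →
      ∀ x : H, HasSum (fun n => P (A n) x) (P (⋃ n, A n) x))
    (hcov : ∀ E : Set (Set.Ico (0:ℝ) 1), MeasurableSet E →
      ∑ j : Fin N, (S j) ∘L (P ((sigma01 hN0 j) ⁻¹' E)) ∘L (adjoint (S j)) = P E)
    (f : H) (hf : ‖f‖ = 1)
    (μf : Measure (Set.Ico (0:ℝ) 1)) [IsProbabilityMeasure μf]
    (hμf : ∀ E : Set (Set.Ico (0:ℝ) 1), MeasurableSet E →
      μf E = ENNReal.ofReal (‖P E f‖ ^ 2)) :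
    ∀ (k : ℕ) (t : ℝ),
      ‖(∫ x, Complex.exp ((t * (x : ℝ) : ℝ) * Complex.I) ∂μf) -
          ∑ α : Fin k → Fin N,
            Complex.exp
                ((t * ∑ i : Fin k, (α i : ℝ) / (N : ℝ) ^ ((i : ℕ) + 1) : ℝ) * Complex.I) *
              (‖List.foldl (fun (v : H) (T : H →L[ℂ] H) => T v) f
                  (List.ofFn fun i => adjoint (S (α i)))‖ ^ 2 : ℝ)‖ ≤
        |t| / (N : ℝ) ^ k := by
  intro k t
  have hN' : (0:ℝ) < N := by exact_mod_cast hN0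
  have hpow : (0:ℝ) < (N:ℝ) ^ k := by positivity
  -- P of the empty set is zero
  have hP0 : P ∅ = 0 := by
    ext v
    have h := hadd (fun _ => ∅) (fun _ => MeasurableSet.empty)
      (fun i j hij => by simp [Function.onFun]) v
    rw [Set.iUnion_empty] at h
    have hv : P ∅ v = 0 := (summable_const_iff _).mp h.summable
    simpa using hv
  -- P on cylinder intervals
  have key : ∀ (m : ℕ) (α : Fin m → Fin N),
      P (Iset N m α) = cuntzT S m α ∘L adjoint (cuntzT S m α) := by
    intro m
    induction m with
    | zero =>
      intro α
      rw [Iset_zero, huniv]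
      show (1 : H →L[ℂ] H) = (1 : H →L[ℂ] H) ∘L adjoint (1 : H →L[ℂ] H)
      rw [adjoint_one', one_def, comp_id]
    | succ m ih =>
      intro α
      rw [← hcov _ (Iset_measurable α)]
      have hterm : ∀ j : Fin N, j ≠ α 0 →
          (S j) ∘L (P ((sigma01 hN0 j) ⁻¹' (Iset N (m+1) α))) ∘L (adjoint (S j)) = 0 := by
        intro j hj
        rw [sigma01_preimage_Iset hN0 j α, if_neg hj, hP0]
        ext v; simp
      rw [Finset.sum_eq_single_of_mem (α 0) (Finset.mem_univ _) (fun j _ hj => hterm j hj)]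
      rw [sigma01_preimage_Iset hN0 (α 0) α, if_pos rfl, ih]
      ext v
      simp [cuntzT, adjoint_comp, comp_apply]
  have hisoT := cuntzT_iso S (fun j => by simpa using hiso j j)
  -- measure of cylinder intervals
  have hmeasval : ∀ (m : ℕ) (α : Fin m → Fin N),
      (μf (Iset N m α)).toReal = ‖adjoint (cuntzT S m α) f‖ ^ 2 := by
    intro m α
    rw [hμf _ (Iset_measurable α), ENNReal.toReal_ofReal (by positivity), key]
    have h1 : (cuntzT S m α ∘L adjoint (cuntzT S m α)) f
        = cuntzT S m α (adjoint (cuntzT S m α) f) := rfl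
    rw [h1, norm_map_of_iso _ (hisoT m α)]
  -- the two integrands
  set φ : Set.Ico (0:ℝ) 1 → ℂ := fun x => Complex.exp ((t * (x:ℝ) : ℝ) * Complex.I) with hφ
  set ψ : Set.Ico (0:ℝ) 1 → ℂ := fun x => ∑ α : Fin k → Fin N,
      (Iset N k α).indicator (fun _ => Complex.exp ((t * cnum N k α : ℝ) * Complex.I)) x with hψ
  have hφcont : Continuous φ := by
    apply Complex.continuous_exp.comp
    exact (Complex.continuous_ofReal.comp
      (continuous_const.mul continuous_subtype_val)).mul continuous_const
  have hφint : Integrable φ μf := by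
    refine (integrable_const (1:ℝ)).mono' hφcont.aestronglyMeasurable ?_
    filter_upwards with x
    exact le_of_eq (Complex.norm_exp_ofReal_mul_I (t * (x:ℝ)))
  have hψint_each : ∀ α : Fin k → Fin N, Integrable ((Iset N k α).indicator
      (fun _ => Complex.exp ((t * cnum N k α : ℝ) * Complex.I))) μf :=
    fun α => (integrable_const _).indicator (Iset_measurable α)
  have hψint : Integrable ψ μf := integrable_finset_sum _ (fun α _ => hψint_each α)
  have hψeq : ∫ x, ψ x ∂μf = ∑ α : Fin k → Fin N,
      Complex.exp ((t * cnum N k α : ℝ) * Complex.I)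
        * ((‖adjoint (cuntzT S k α) f‖ ^ 2 : ℝ) : ℂ) := by
    rw [hψ, integral_finset_sum _ (fun α _ => hψint_each α)]
    refine Finset.sum_congr rfl fun α _ => ?_
    rw [integral_indicator_const _ (Iset_measurable α), measureReal_def, hmeasval k α, Complex.real_smul,
      mul_comm]
  -- pointwise bound
  have hpt : ∀ x : Set.Ico (0:ℝ) 1, ‖φ x - ψ x‖ ≤ |t| / (N:ℝ)^k := by
    intro x
    have hx0 : (0:ℝ) ≤ (x:ℝ) := x.2.1
    have hx1 : (x:ℝ) < 1 := x.2.2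
    obtain ⟨α, hα⟩ : ∃ α : Fin k → Fin N, ⌊(x:ℝ) * (N:ℝ)^k⌋₊ = (nfin α : ℕ) := by
      have hflt : ⌊(x:ℝ) * (N:ℝ)^k⌋₊ < N ^ k := by
        rw [Nat.floor_lt (by positivity)]
        have h2 : (x:ℝ) * (N:ℝ)^k < 1 * (N:ℝ)^k := by gcongr
        push_cast
        linarith
      obtain ⟨α, hα2⟩ := nfin_surjective (⟨⌊(x:ℝ) * (N:ℝ)^k⌋₊, hflt⟩ : Fin (N ^ k))
      exact ⟨α, by rw [hα2]⟩
    have hmem : x ∈ Iset N k α := (mem_Iset_iff hN0 α x).mpr hα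
    have hz : ∀ β : Fin k → Fin N, β ≠ α →
        (Iset N k β).indicator
          (fun _ => Complex.exp ((t * cnum N k β : ℝ) * Complex.I)) x = 0 := by
      intro β hβ
      refine Set.indicator_of_notMem ?_ _
      rw [mem_Iset_iff hN0 β x]
      intro hc
      exact hβ (nfin_injective (Fin.val_injective (hc.symm.trans hα)))
    have hψx : ψ x = Complex.exp ((t * cnum N k α : ℝ) * Complex.I) := by
      rw [hψ]
      exact (Finset.sum_eq_single_of_mem α (Finset.mem_univ _)
        (fun β _ hβ => hz β hβ)).trans (Set.indicator_of_mem hmem _)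
    rw [hψx, hφ]
    have hlip := exp_mul_I_lip (t * (x:ℝ)) (t * cnum N k α)
    have hm := hmem
    rw [Iset, Set.mem_preimage, Set.mem_Ico] at hm
    calc ‖Complex.exp (((t * (x:ℝ) : ℝ) : ℂ) * Complex.I)
          - Complex.exp (((t * cnum N k α : ℝ) : ℂ) * Complex.I)‖
        ≤ |t * (x:ℝ) - t * cnum N k α| := hlip
      _ = |t| * |(x:ℝ) - cnum N k α| := by rw [← mul_sub, abs_mul]
      _ ≤ |t| * (1 / (N:ℝ)^k) := by
          have habs : |(x:ℝ) - cnum N k α| ≤ 1 / (N:ℝ)^k := by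
            rw [abs_of_nonneg (by linarith [hm.1])]
            linarith [hm.2]
          exact mul_le_mul_of_nonneg_left habs (abs_nonneg t)
      _ = |t| / (N:ℝ)^k := by ring
  -- identify the target sum with ∫ ψ
  have hsum_eq : (∑ α : Fin k → Fin N,
      Complex.exp ((t * ∑ i : Fin k, (α i : ℝ) / (N : ℝ) ^ ((i : ℕ) + 1) : ℝ) * Complex.I) *
        ((‖List.foldl (fun (v : H) (T : H →L[ℂ] H) => T v) f
            (List.ofFn fun i => adjoint (S (α i)))‖ ^ 2 : ℝ) : ℂ))
      = ∫ x, ψ x ∂μf := by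
    rw [hψeq]
    refine Finset.sum_congr rfl fun α _ => ?_
    rw [foldl_eq_adjoint S k α f]
    rfl
  rw [hsum_eq, ← integral_sub hφint hψint]
  have hb := norm_integral_le_of_norm_le (μ := μf) (integrable_const (|t| / (N:ℝ)^k))
    (Filter.Eventually.of_forall hpt)
  simpa [integral_const, measure_univ] using hb
end
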